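/- Let f:[0,1] → ℝ be absolutely continuous with f(0) = f(1) = 0 and |f'| equal to a constant c a.e. Then, with J(f) defined as the infimum of (4/3)∫_0^1 (w'(s) + f'(s)²)^{3/2} ds over absolutely continuous w with w(0) = 0 satisfying w(t) - w(s) ≥ -(f(t)-f(s))²/(t-s) for all 0 ≤ s < t ≤ 1, we have J(f) = (4/3)∫_0^1 |f'(t)|³ dt = (4/3)c³. -/

import Mathlib

open MeasureTheory

/-- The variational rate function for the directed geodesic: the infimum of
`(4/3)∫_0^1 (w' + (f')²)^{3/2}` over absolutely continuous weight functions `w`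
with `w(0)=0` satisfying `w(t)-w(s) ≥ -(f(t)-f(s))²/(t-s)`. -/
noncomputable def geoRate (f f' : ℝ → ℝ) : ENNReal :=
  sInf {I : ENNReal | ∃ w w' : ℝ → ℝ, w 0 = 0 ∧
    IntegrableOn w' (Set.Icc (0:ℝ) 1) ∧
    (∀ s t : ℝ, 0 ≤ s → s ≤ t → t ≤ 1 → w t - w s = ∫ u in s..t, w' u) ∧
    (∀ s t : ℝ, 0 ≤ s → s < t → t ≤ 1 →
      -(f t - f s)^2 / (t - s) ≤ w t - w s) ∧
    I = (4/3 : ENNReal) * ∫⁻ t in Set.Ioc (0:ℝ) 1,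
      ENNReal.ofReal (w' t + (f' t)^2) ^ ((3:ℝ)/2)}

lemma key_rpow (x : ℝ) : ENNReal.ofReal (x^2) ^ ((3:ℝ)/2) = ENNReal.ofReal (|x|^3) := by
  rw [ENNReal.ofReal_rpow_of_nonneg (sq_nonneg x) (by norm_num)]
  congr 1
  have : x^2 = |x|^2 := (sq_abs x).symm
  rw [this, ← Real.rpow_natCast |x| 2, ← Real.rpow_mul (abs_nonneg x), ← Real.rpow_natCast |x| 3]
  norm_num

lemma ofReal_max_zero (x : ℝ) : ENNReal.ofReal (max x 0) = ENNReal.ofReal x := by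
  rcases le_total x 0 with h | h
  · simp [ENNReal.ofReal_eq_zero.2 h, max_eq_right h]
  · simp [max_eq_left h]

/-- If `|f'| ≡ c` a.e. on `[0,1]` and `f(0)=f(1)=0`, then
`J(f) = (4/3)∫_0^1 |f'|³ = (4/3)c³`. -/
theorem geoRate_constant_slope (f f' : ℝ → ℝ) (c : ℝ) (hc : 0 ≤ c)
    (hf0 : f 0 = 0) (hf1 : f 1 = 0)
    (hfint : IntegrableOn f' (Set.Icc (0:ℝ) 1))
    (hfftc : ∀ s t : ℝ, 0 ≤ s → s ≤ t → t ≤ 1 → f t - f s = ∫ u in s..t, f' u)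
    (hconst : ∀ᵐ t ∂(volume.restrict (Set.Ioc (0:ℝ) 1)), |f' t| = c) :
    geoRate f f' =
      (4/3 : ENNReal) * ∫⁻ t in Set.Ioc (0:ℝ) 1, ENNReal.ofReal (|f' t|^3) ∧
    geoRate f f' = ENNReal.ofReal ((4/3) * c^3) := by

  set μ := volume.restrict (Set.Ioc (0:ℝ) 1) with hμ
  haveI hprob : IsProbabilityMeasure μ := ⟨by simp [hμ, Measure.restrict_apply_univ]⟩
  -- the lintegral of |f'|^3 equals c^3
  have lint1 : ∫⁻ t, ENNReal.ofReal (|f' t|^3) ∂μ = ENNReal.ofReal (c^3) := by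
    rw [lintegral_congr_ae (hconst.mono fun t ht => by rw [ht])]
    simp
  have hofr : (4/3 : ENNReal) * ENNReal.ofReal (c^3) = ENNReal.ofReal ((4/3) * c^3) := by
    rw [ENNReal.ofReal_mul (by norm_num)]
    congr 1
    rw [ENNReal.ofReal_div_of_pos (by norm_num)]
    norm_num
  -- Upper bound: take w = 0
  have hub : geoRate f f' ≤ ENNReal.ofReal ((4/3) * c^3) := by
    have hmem : ((4/3 : ENNReal) * ∫⁻ t in Set.Ioc (0:ℝ) 1,
        ENNReal.ofReal ((fun _ : ℝ => (0:ℝ)) t + (f' t)^2) ^ ((3:ℝ)/2)) ∈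
        {I : ENNReal | ∃ w w' : ℝ → ℝ, w 0 = 0 ∧
          IntegrableOn w' (Set.Icc (0:ℝ) 1) ∧
          (∀ s t : ℝ, 0 ≤ s → s ≤ t → t ≤ 1 → w t - w s = ∫ u in s..t, w' u) ∧
          (∀ s t : ℝ, 0 ≤ s → s < t → t ≤ 1 →
            -(f t - f s)^2 / (t - s) ≤ w t - w s) ∧
          I = (4/3 : ENNReal) * ∫⁻ t in Set.Ioc (0:ℝ) 1,
            ENNReal.ofReal (w' t + (f' t)^2) ^ ((3:ℝ)/2)} := by
      refine ⟨fun _ => 0, fun _ => 0, rfl, integrableOn_zero, by simp, ?_, rfl⟩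
      intro s t hs hst ht
      have h1 : -(f t - f s)^2 ≤ 0 := neg_nonpos.2 (sq_nonneg _)
      have h2 : (0:ℝ) ≤ t - s := (sub_pos.2 hst).le
      simpa using div_nonpos_iff.2 (Or.inr ⟨h1, h2⟩)
    have hle := sInf_le hmem
    have heq : (∫⁻ t in Set.Ioc (0:ℝ) 1,
        ENNReal.ofReal ((fun _ : ℝ => (0:ℝ)) t + (f' t)^2) ^ ((3:ℝ)/2)) =
        ENNReal.ofReal (c^3) := by
      rw [← lint1]
      refine lintegral_congr_ae (hconst.mono fun t ht => ?_)
      simp only [zero_add]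
      rw [key_rpow]
    rw [heq] at hle
    rw [← hofr]
    exact hle
  -- Lower bound
  have hlb : ENNReal.ofReal ((4/3) * c^3) ≤ geoRate f f' := by
    rw [← hofr]
    refine le_sInf ?_
    rintro I ⟨w, w', hw0, hwint, hwftc, hwcon, rfl⟩
    set g : ℝ → ℝ := fun t => w' t + (f' t)^2 with hg
    have hw'int : Integrable w' μ := hwint.mono_set Set.Ioc_subset_Icc_self
    have hf2eq : (fun t => (f' t)^2) =ᵐ[μ] fun _ => c^2 :=
      hconst.mono fun t ht => by dsimp only; rw [← ht, sq_abs]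
    have hf2int : Integrable (fun t => (f' t)^2) μ :=
      (integrable_const (c^2)).congr hf2eq.symm
    have hgint : Integrable g μ := hw'int.add hf2int
    have hw1 : 0 ≤ w 1 := by
      have := hwcon 0 1 le_rfl one_pos le_rfl
      simpa [hf0, hf1, hw0] using this
    have hintw' : ∫ t, w' t ∂μ = w 1 := by
      have := hwftc 0 1 le_rfl zero_le_one le_rfl
      rw [intervalIntegral.integral_of_le zero_le_one] at this
      rw [hμ]
      rw [hw0, sub_zero] at this
      exact this.symm
    have hintg : c^2 ≤ ∫ t, g t ∂μ := by
      rw [hg, integral_add hw'int hf2int, hintw', integral_congr_ae hf2eq]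
      simp only [integral_const, probReal_univ, one_smul, smul_eq_mul]
      linarith
    -- the truncated function
    set h : ℝ → ℝ := fun t => max (g t) 0 with hh
    have hhint : Integrable h μ := hgint.pos_part
    have hhmeas : AEStronglyMeasurable h μ := hhint.aestronglyMeasurable
    have hnorm : ∀ t, (‖h t‖₊ : ENNReal) = ENNReal.ofReal (g t) := by
      intro t
      rw [← enorm_eq_nnnorm, Real.enorm_eq_ofReal (le_max_right _ _)]
      exact ofReal_max_zero _
    set A : ENNReal := ∫⁻ t, ENNReal.ofReal (g t) ^ ((3:ℝ)/2) ∂μ with hA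
    -- Jensen via Lp monotonicity
    have hq : (1 : ENNReal) ≤ (3/2 : ENNReal) := by
      rw [ENNReal.le_div_iff_mul_le (Or.inl two_ne_zero) (Or.inl ENNReal.ofNat_ne_top)]
      norm_num
    have hjen : ∫⁻ t, ENNReal.ofReal (g t) ∂μ ≤ A ^ ((2:ℝ)/3) := by
      have h1 : eLpNorm h 1 μ = ∫⁻ t, ENNReal.ofReal (g t) ∂μ := by
        rw [eLpNorm_one_eq_lintegral_enorm]
        exact lintegral_congr fun t => hnorm t
      have h2 : eLpNorm h (3/2) μ = A ^ ((2:ℝ)/3) := by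
        rw [eLpNorm_eq_lintegral_rpow_enorm_toReal (by simp) (ENNReal.div_lt_top (by norm_num) (by norm_num)).ne]
        have ht : ((3/2 : ENNReal)).toReal = (3:ℝ)/2 := by
          rw [ENNReal.toReal_div]; norm_num
        rw [ht]
        congr 1
        · exact lintegral_congr fun t => by rw [enorm_eq_nnnorm, hnorm t]
        · norm_num
      rw [← h1, ← h2]
      exact eLpNorm_le_eLpNorm_of_exponent_le hq hhmeas
    have hstep : ENNReal.ofReal (c^2) ≤ A ^ ((2:ℝ)/3) := by
      refine le_trans ?_ hjen
      have hle1 : ∫ t, g t ∂μ ≤ ∫ t, h t ∂μ :=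
        integral_mono hgint hhint fun t => le_max_left _ _
      have heq1 : ENNReal.ofReal (∫ t, h t ∂μ) = ∫⁻ t, ENNReal.ofReal (h t) ∂μ :=
        ofReal_integral_eq_lintegral_ofReal hhint (Filter.Eventually.of_forall fun t => le_max_right _ _)
      have heq2 : (∫⁻ t, ENNReal.ofReal (h t) ∂μ) = ∫⁻ t, ENNReal.ofReal (g t) ∂μ :=
        lintegral_congr fun t => ofReal_max_zero _
      calc ENNReal.ofReal (c^2) ≤ ENNReal.ofReal (∫ t, g t ∂μ) := ENNReal.ofReal_le_ofReal hintg
        _ ≤ ENNReal.ofReal (∫ t, h t ∂μ) := ENNReal.ofReal_le_ofReal hle1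
        _ = ∫⁻ t, ENNReal.ofReal (g t) ∂μ := by rw [heq1, heq2]
    have hfinal : ENNReal.ofReal (c^3) ≤ A := by
      have := ENNReal.rpow_le_rpow hstep (by norm_num : (0:ℝ) ≤ 3/2)
      rw [← ENNReal.rpow_mul] at this
      norm_num at this
      calc ENNReal.ofReal (c^3) = ENNReal.ofReal (c^2) ^ ((3:ℝ)/2) := by
            rw [key_rpow c, abs_of_nonneg hc]
        _ ≤ A := this
    calc (4/3 : ENNReal) * ENNReal.ofReal (c^3)
        ≤ (4/3 : ENNReal) * A := mul_le_mul_right hfinal _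
      _ = _ := rfl
  refine ⟨?_, le_antisymm hub hlb⟩
  rw [le_antisymm hub hlb, ← hofr, lint1]
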